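/- Let d ∈ ℕ, τ > 0, λ, μ ∈ [0,∞)^d, W ∈ [0,∞)^{d×d}, let Γ ∈ ℝ^{d×d} satisfy Γ_{ik} ≥ 0 for i ≠ k and ∑_{k} Γ_{ik} = 0 for each i, let σ, ρ ∈ [0,1], and let r : [0,τ] → [0,∞)^d be continuous. Then there exists a unique differentiable function p : [0,τ] → ℝ^d with p_i(0) = 1 − ρ for all i and, for all i ∈ {1,…,d} and t ∈ [0,τ], p_i'(t) = λ_i p_i(t)² − ( λ_i + μ_i + ∑_{j=1}^d W_{ij} r_j(t) ) p_i(t) + ∑_{j=1}^d Γ_{ij} p_j(t) + (1−σ)( μ_i + ∑_{j=1}^d W_{ij} r_j(t) ). Moreover this solution satisfies p(t) ∈ [0,1]^d for all t ∈ [0,τ]. -/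

import Mathlib

open scoped BigOperators

noncomputable section

/-- `p` solves the Riccati-type backward system (4.5) for the non-observation
probabilities on `[0,τ]`, with initial condition `p_i(0) = 1 − ρ`. -/
def IsNonObsSolution {d : ℕ} (τ : ℝ) (lam mu : Fin d → ℝ) (W Γ : Fin d → Fin d → ℝ)
    (sig rho : ℝ) (r : ℝ → Fin d → ℝ) (p : ℝ → Fin d → ℝ) : Prop :=
  (p 0 = fun _ => 1 - rho) ∧
    ∀ i : Fin d, ∀ t ∈ Set.Icc (0 : ℝ) τ,
      HasDerivWithinAt (fun s => p s i)
        (lam i * (p t i) ^ 2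
          - (lam i + mu i + ∑ j, W i j * r t j) * p t i
          + (∑ j, Γ i j * p t j)
          + (1 - sig) * (mu i + ∑ j, W i j * r t j))
        (Set.Icc 0 τ) t

namespace NonObsAux

def clampU (a : ℝ) : ℝ := max 0 (min a 1)


lemma clamp_nonneg (a : ℝ) : 0 ≤ clampU a := le_max_left _ _

lemma clamp_le_one (a : ℝ) : clampU a ≤ 1 :=
  max_le zero_le_one (min_le_right _ _)

lemma clamp_abs_le (a : ℝ) : |clampU a| ≤ 1 := by
  rw [abs_of_nonneg (clamp_nonneg a)]; exact clamp_le_one a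

lemma clamp_lip (a b : ℝ) : |clampU a - clampU b| ≤ |a - b| := by
  unfold clampU
  calc |max 0 (min a 1) - max 0 (min b 1)|
      = |max (min a 1) 0 - max (min b 1) 0| := by rw [max_comm, max_comm (min b 1)]
    _ ≤ |min a 1 - min b 1| := abs_max_sub_max_le_abs _ _ _
    _ ≤ max |a - b| |1 - 1| := abs_min_sub_min_le_max _ _ _ _
    _ ≤ |a - b| := by simp

lemma clamp_eq_self {a : ℝ} (h : a ∈ Set.Icc (0:ℝ) 1) : clampU a = a := by
  unfold clampU
  rw [min_eq_left h.2, max_eq_right h.1]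

lemma clamp_eq_one {a : ℝ} (h : 1 ≤ a) : clampU a = 1 := by
  unfold clampU
  rw [min_eq_right h]; exact max_eq_right zero_le_one

lemma clamp_eq_zero {a : ℝ} (h : a ≤ 0) : clampU a = 0 :=
  max_eq_left (le_trans (min_le_left _ _) h)

lemma sum_diff_bound {d : ℕ} (g u v : Fin d → ℝ) (D : ℝ)
    (h : ∀ j, |u j - v j| ≤ D) :
    |(∑ j, g j * u j) - ∑ j, g j * v j| ≤ (∑ j, |g j|) * D := by
  rw [← Finset.sum_sub_distrib]
  calc |∑ j, (g j * u j - g j * v j)|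
      ≤ ∑ j, |g j * u j - g j * v j| := Finset.abs_sum_le_sum_abs _ _
    _ ≤ ∑ j, |g j| * D := Finset.sum_le_sum fun j _ => by
        rw [← mul_sub, abs_mul]; exact mul_le_mul_of_nonneg_left (h j) (abs_nonneg _)
    _ = (∑ j, |g j|) * D := (Finset.sum_mul _ _ _).symm

lemma coord_lip {lam c1 M D SG a b Sa Sb T : ℝ} (hlam : 0 ≤ lam) (hc1 : 0 ≤ c1)
    (hD : 0 ≤ D) (ha : |a| ≤ M) (hb : |b| ≤ M) (hab : |a - b| ≤ D)
    (hS : |Sa - Sb| ≤ SG * D) :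
    |(lam * a ^ 2 - c1 * a + Sa + T) - (lam * b ^ 2 - c1 * b + Sb + T)|
      ≤ (2 * M * lam + c1 + SG) * D := by
  have hM : 0 ≤ M := le_trans (abs_nonneg a) ha
  have h1 : |a ^ 2 - b ^ 2| ≤ 2 * M * D := by
    have he : a ^ 2 - b ^ 2 = (a + b) * (a - b) := by ring
    rw [he, abs_mul]
    have hab2 : |a + b| ≤ 2 * M := (abs_add_le a b).trans (by linarith)
    exact mul_le_mul hab2 hab (abs_nonneg _) (by linarith)
  have key : (lam * a ^ 2 - c1 * a + Sa + T) - (lam * b ^ 2 - c1 * b + Sb + T)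
      = lam * (a ^ 2 - b ^ 2) - c1 * (a - b) + (Sa - Sb) := by ring
  rw [key]
  have h2 : |lam * (a ^ 2 - b ^ 2)| ≤ lam * (2 * M * D) := by
    rw [abs_mul, abs_of_nonneg hlam]
    exact mul_le_mul_of_nonneg_left h1 hlam
  have h3 : |c1 * (a - b)| ≤ c1 * D := by
    rw [abs_mul, abs_of_nonneg hc1]
    exact mul_le_mul_of_nonneg_left hab hc1
  calc |lam * (a ^ 2 - b ^ 2) - c1 * (a - b) + (Sa - Sb)|
      ≤ |lam * (a ^ 2 - b ^ 2) - c1 * (a - b)| + |Sa - Sb| := abs_add_le _ _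
    _ ≤ |lam * (a ^ 2 - b ^ 2)| + |c1 * (a - b)| + |Sa - Sb| := by
        linarith [abs_sub (lam * (a ^ 2 - b ^ 2)) (c1 * (a - b))]
    _ ≤ lam * (2 * M * D) + c1 * D + SG * D := by linarith
    _ = (2 * M * lam + c1 + SG) * D := by ring

lemma coord_abs_bound {lam c1 SG TB a S T : ℝ} (hlam : 0 ≤ lam) (hc1 : 0 ≤ c1)
    (ha0 : 0 ≤ a) (ha1 : a ≤ 1) (hS : |S| ≤ SG) (hT : |T| ≤ TB) :
    |lam * a ^ 2 - c1 * a + S + T| ≤ lam + c1 + SG + TB := by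
  have h1 : |lam * a ^ 2| ≤ lam := by
    rw [abs_of_nonneg (by positivity)]
    have ha2 : a ^ 2 ≤ 1 := by nlinarith
    nlinarith
  have h2 : |c1 * a| ≤ c1 := by
    rw [abs_of_nonneg (by positivity)]; nlinarith
  calc |lam * a ^ 2 - c1 * a + S + T|
      ≤ |lam * a ^ 2 - c1 * a + S| + |T| := abs_add_le _ _
    _ ≤ |lam * a ^ 2 - c1 * a| + |S| + |T| := by
        linarith [abs_add_le (lam * a ^ 2 - c1 * a) S]
    _ ≤ |lam * a ^ 2| + |c1 * a| + |S| + |T| := by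
        linarith [abs_sub (lam * a ^ 2) (c1 * a)]
    _ ≤ lam + c1 + SG + TB := by linarith

lemma barrier_le {τ b : ℝ} {f f' : ℝ → ℝ}
    (hf : ∀ t ∈ Set.Icc (0:ℝ) τ, HasDerivWithinAt f (f' t) (Set.Icc 0 τ) t)
    (h0 : f 0 ≤ b) (hd : ∀ t ∈ Set.Icc (0:ℝ) τ, b ≤ f t → f' t ≤ 0) :
    ∀ t ∈ Set.Icc (0:ℝ) τ, f t ≤ b := by
  intro t₁ ht₁
  by_contra hcon
  push_neg at hcon
  have hfc : ContinuousOn f (Set.Icc 0 τ) := fun s hs => (hf s hs).continuousWithinAt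
  set S : Set ℝ := Set.Icc 0 t₁ ∩ f ⁻¹' Set.Iic b with hS
  have hSclosed : IsClosed S :=
    (hfc.mono (Set.Icc_subset_Icc_right ht₁.2)).preimage_isClosed_of_isClosed
      isClosed_Icc isClosed_Iic
  have h0S : (0:ℝ) ∈ S := ⟨⟨le_refl 0, ht₁.1⟩, h0⟩
  have hbdd : BddAbove S := BddAbove.mono Set.inter_subset_left bddAbove_Icc
  have ht₀S : sSup S ∈ S := hSclosed.csSup_mem ⟨0, h0S⟩ hbdd
  set t₀ := sSup S with ht₀def
  have ht₀1 : t₀ ≤ t₁ := ht₀S.1.2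
  have ht₀0 : 0 ≤ t₀ := ht₀S.1.1
  have hgt : ∀ s ∈ Set.Ioc t₀ t₁, b < f s := by
    intro s hs
    by_contra hc; push_neg at hc
    have hsS : s ∈ S := ⟨⟨le_trans ht₀0 hs.1.le, hs.2⟩, hc⟩
    exact absurd (le_csSup hbdd hsS) (not_le.2 hs.1)
  have ht₀lt : t₀ < t₁ := by
    rcases lt_or_eq_of_le ht₀1 with h | h
    · exact h
    · exfalso
      have := ht₀S.2
      rw [Set.mem_preimage, Set.mem_Iic, h] at this
      exact absurd this (not_le.2 hcon)
  have hderiv : ∀ x ∈ Set.Ioo t₀ t₁, HasDerivAt f (f' x) x ∧ f' x ≤ 0 := by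
    intro x hx
    have hx' : x ∈ Set.Icc (0:ℝ) τ := ⟨le_trans ht₀0 hx.1.le, le_trans hx.2.le ht₁.2⟩
    have hda : HasDerivAt f (f' x) x :=
      (hf x hx').hasDerivAt (Icc_mem_nhds (lt_of_le_of_lt ht₀0 hx.1) (lt_of_lt_of_le hx.2 ht₁.2))
    exact ⟨hda, hd x hx' (le_of_lt (hgt x ⟨hx.1, hx.2.le⟩))⟩
  have hanti : AntitoneOn f (Set.Icc t₀ t₁) := by
    apply antitoneOn_of_deriv_nonpos (convex_Icc _ _)
      (hfc.mono (Set.Icc_subset_Icc ht₀0 ht₁.2))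
    · intro x hx
      rw [interior_Icc] at hx
      exact ((hderiv x hx).1.differentiableAt).differentiableWithinAt
    · intro x hx
      rw [interior_Icc] at hx
      rw [(hderiv x hx).1.deriv]
      exact (hderiv x hx).2
  have hle := hanti (Set.left_mem_Icc.2 ht₀lt.le) (Set.right_mem_Icc.2 ht₀lt.le) ht₀lt.le
  exact absurd (le_trans hle ht₀S.2) (not_le.2 hcon)

end NonObsAux

set_option maxHeartbeats 1000000 in
/-- Well-posedness of the backward equations (4.5) for the non-observation probabilities:
there is a unique solution on `[0,τ]` with `p_i(0) = 1 − ρ`, and this solution takes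
values in `[0,1]^d`. -/
theorem nonobservation_equation_existence_uniqueness (d : ℕ) (hd : 0 < d)
    (τ : ℝ) (hτ : 0 < τ)
    (lam mu : Fin d → ℝ) (hlam : ∀ i, 0 ≤ lam i) (hmu : ∀ i, 0 ≤ mu i)
    (W : Fin d → Fin d → ℝ) (hW : ∀ i j, 0 ≤ W i j)
    (Γ : Fin d → Fin d → ℝ)
    (hΓ_off : ∀ i k, i ≠ k → 0 ≤ Γ i k)
    (hΓ_row : ∀ i, ∑ k, Γ i k = 0)
    (sig rho : ℝ) (hsig : sig ∈ Set.Icc (0 : ℝ) 1) (hrho : rho ∈ Set.Icc (0 : ℝ) 1)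
    (r : ℝ → Fin d → ℝ) (hr_cont : ContinuousOn r (Set.Icc 0 τ))
    (hr_nonneg : ∀ t ∈ Set.Icc (0 : ℝ) τ, ∀ j, 0 ≤ r t j) :
    ∃ p : ℝ → Fin d → ℝ,
      (IsNonObsSolution τ lam mu W Γ sig rho r p ∧
        ∀ t ∈ Set.Icc (0 : ℝ) τ, ∀ i, p t i ∈ Set.Icc (0 : ℝ) 1) ∧
      ∀ q : ℝ → Fin d → ℝ, IsNonObsSolution τ lam mu W Γ sig rho r q →
        ∀ t ∈ Set.Icc (0 : ℝ) τ, q t = p t := by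
  classical
  obtain ⟨hsig0, hsig1⟩ := hsig
  obtain ⟨hrho0, hrho1⟩ := hrho
  -- time projection onto [0, τ]
  set π : ℝ → ℝ := fun t => max 0 (min t τ) with hπdef
  have hπmem : ∀ t, π t ∈ Set.Icc (0:ℝ) τ :=
    fun t => ⟨le_max_left _ _, max_le hτ.le (min_le_right _ _)⟩
  have hπeq : ∀ t ∈ Set.Icc (0:ℝ) τ, π t = t := by
    intro t ht
    simp only [hπdef]
    rw [min_eq_left ht.2, max_eq_right ht.1]
  have hπcont : Continuous π := continuous_const.max (continuous_id.min continuous_const)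
  -- bound on r
  obtain ⟨Mr0, hMr0⟩ := isCompact_Icc.exists_bound_of_continuousOn hr_cont
  set Mr := max Mr0 0 with hMrdef
  have hMr : 0 ≤ Mr := le_max_right _ _
  have hrb : ∀ t : ℝ, ∀ j, |r (π t) j| ≤ Mr := by
    intro t j
    have h1 : ‖r (π t) j‖ ≤ ‖r (π t)‖ := norm_le_pi_norm (r (π t)) j
    have h2 : ‖r (π t)‖ ≤ Mr0 := hMr0 _ (hπmem t)
    calc |r (π t) j| = ‖r (π t) j‖ := (Real.norm_eq_abs _).symm
      _ ≤ Mr0 := le_trans h1 h2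
      _ ≤ Mr := le_max_left _ _
  -- the interaction term and its bounds
  set A : Fin d → ℝ → ℝ := fun i t => ∑ j, W i j * r (π t) j with hAdef
  have hA_nonneg : ∀ i t, 0 ≤ A i t := fun i t =>
    Finset.sum_nonneg fun j _ => mul_nonneg (hW i j) (hr_nonneg _ (hπmem t) j)
  set MA := (∑ i, ∑ j, W i j) * Mr with hMAdef
  have hMA0 : 0 ≤ MA :=
    mul_nonneg (Finset.sum_nonneg fun i _ => Finset.sum_nonneg fun j _ => hW i j) hMr
  have hA_le : ∀ i t, A i t ≤ MA := by
    intro i t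
    calc A i t ≤ ∑ j, W i j * Mr :=
          Finset.sum_le_sum fun j _ =>
            mul_le_mul_of_nonneg_left (le_trans (le_abs_self _) (hrb t j)) (hW i j)
      _ = (∑ j, W i j) * Mr := (Finset.sum_mul _ _ _).symm
      _ ≤ MA := mul_le_mul_of_nonneg_right
          (Finset.single_le_sum (f := fun k => ∑ j, W k j)
            (fun k _ => Finset.sum_nonneg fun j _ => hW k j) (Finset.mem_univ i)) hMr
  have hA_cont : ∀ i, Continuous (A i) := by
    intro i
    apply continuous_finset_sum
    intro j _
    exact continuous_const.mul
      ((continuous_apply j).comp (hr_cont.comp_continuous hπcont hπmem))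
  -- clamp
  -- vector fields
  set F : ℝ → (Fin d → ℝ) → Fin d → ℝ := fun t x i =>
    lam i * x i ^ 2 - (lam i + mu i + A i t) * x i + (∑ j, Γ i j * x j)
      + (1 - sig) * (mu i + A i t) with hFdef
  set G : ℝ → (Fin d → ℝ) → Fin d → ℝ := fun t x => F t (fun j => NonObsAux.clampU (x j)) with hGdef
  -- constants
  set SΓ : Fin d → ℝ := fun i => ∑ j, |Γ i j| with hSΓdef
  have hSΓ0 : ∀ i, 0 ≤ SΓ i := fun i => Finset.sum_nonneg fun j _ => abs_nonneg _
  set KL := (∑ i, (3 * lam i + mu i + MA + SΓ i)) + 1 with hKLdef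
  have hKLterm : ∀ i, 0 ≤ 3 * lam i + mu i + MA + SΓ i := fun i => by
    have := hlam i; have := hmu i; have := hSΓ0 i; linarith
  have hKL0 : 0 ≤ KL := by
    have := Finset.sum_nonneg (s := Finset.univ) fun i _ => hKLterm i
    simp only [hKLdef]; linarith
  set CB := (∑ i, (2 * lam i + 2 * mu i + 2 * MA + SΓ i)) + 1 with hCBdef
  have hCBterm : ∀ i, 0 ≤ 2 * lam i + 2 * mu i + 2 * MA + SΓ i := fun i => by
    have := hlam i; have := hmu i; have := hSΓ0 i; linarith
  have hCB0 : 0 ≤ CB := by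
    have := Finset.sum_nonneg (s := Finset.univ) fun i _ => hCBterm i
    simp only [hCBdef]; linarith
  -- bound on G
  have hGbound : ∀ (t : ℝ) (x : Fin d → ℝ), ‖G t x‖ ≤ CB := by
    intro t x
    rw [pi_norm_le_iff_of_nonneg hCB0]
    intro i
    rw [Real.norm_eq_abs]
    have hS : |∑ j, Γ i j * NonObsAux.clampU (x j)| ≤ SΓ i := by
      calc |∑ j, Γ i j * NonObsAux.clampU (x j)| ≤ ∑ j, |Γ i j * NonObsAux.clampU (x j)| := Finset.abs_sum_le_sum_abs _ _
        _ ≤ ∑ j, |Γ i j| := Finset.sum_le_sum fun j _ => by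
            rw [abs_mul]
            calc |Γ i j| * |NonObsAux.clampU (x j)| ≤ |Γ i j| * 1 :=
                  mul_le_mul_of_nonneg_left (NonObsAux.clamp_abs_le _) (abs_nonneg _)
              _ = |Γ i j| := mul_one _
        _ = SΓ i := rfl
    have hT : |(1 - sig) * (mu i + A i t)| ≤ mu i + MA := by
      rw [abs_of_nonneg (mul_nonneg (by linarith) (add_nonneg (hmu i) (hA_nonneg i t)))]
      have h1 : mu i + A i t ≤ mu i + MA := by linarith [hA_le i t]
      have h2 : 0 ≤ mu i + A i t := add_nonneg (hmu i) (hA_nonneg i t)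
      nlinarith
    have := NonObsAux.coord_abs_bound (hlam i)
      (by have := hA_nonneg i t; have := hlam i; have := hmu i; linarith :
        (0:ℝ) ≤ lam i + mu i + A i t)
      (NonObsAux.clamp_nonneg (x i)) (NonObsAux.clamp_le_one (x i)) hS hT
    simp only [hGdef, hFdef]
    refine le_trans this ?_
    have hsingle : 2 * lam i + 2 * mu i + 2 * MA + SΓ i
        ≤ ∑ k, (2 * lam k + 2 * mu k + 2 * MA + SΓ k) :=
      Finset.single_le_sum (f := fun k => 2 * lam k + 2 * mu k + 2 * MA + SΓ k)
        (fun k _ => hCBterm k) (Finset.mem_univ i)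
    have := hA_le i t
    simp only [hCBdef]
    linarith
  -- Picard–Lindelöf data
  set x₀ : Fin d → ℝ := fun _ => 1 - rho with hx₀def
  have hpl : IsPicardLindelof G (⟨0, le_refl 0, hτ.le⟩ : Set.Icc (0:ℝ) τ) x₀
      (CB * τ).toNNReal 0 CB.toNNReal KL.toNNReal := by
    refine ⟨?_, ?_, ?_, ?_⟩
    · intro t _
      apply LipschitzWith.lipschitzOnWith
      apply LipschitzWith.of_dist_le_mul
      intro x y
      rw [Real.coe_toNNReal _ hKL0, dist_pi_le_iff (mul_nonneg hKL0 dist_nonneg)]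
      intro i
      rw [Real.dist_eq]
      have hxy : ∀ j, |x j - y j| ≤ dist x y := fun j => by
        rw [← Real.dist_eq]; exact dist_le_pi_dist x y j
      have hcl : ∀ j, |NonObsAux.clampU (x j) - NonObsAux.clampU (y j)| ≤ dist x y := fun j =>
        le_trans (NonObsAux.clamp_lip _ _) (hxy j)
      have hsum : |(∑ j, Γ i j * NonObsAux.clampU (x j)) - ∑ j, Γ i j * NonObsAux.clampU (y j)| ≤ SΓ i * dist x y :=
        NonObsAux.sum_diff_bound _ _ _ _ hcl
      have hkey := NonObsAux.coord_lip (M := 1) (hlam i)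
        (by have := hA_nonneg i t; have := hlam i; have := hmu i; linarith :
          (0:ℝ) ≤ lam i + mu i + A i t)
        dist_nonneg (NonObsAux.clamp_abs_le (x i)) (NonObsAux.clamp_abs_le (y i))
        (hcl i) hsum (T := (1 - sig) * (mu i + A i t))
      simp only [hGdef, hFdef]
      refine le_trans hkey ?_
      apply mul_le_mul_of_nonneg_right _ dist_nonneg
      have hsingle : 3 * lam i + mu i + MA + SΓ i ≤ ∑ k, (3 * lam k + mu k + MA + SΓ k) :=
        Finset.single_le_sum (f := fun k => 3 * lam k + mu k + MA + SΓ k)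
          (fun k _ => hKLterm k) (Finset.mem_univ i)
      have := hA_le i t
      simp only [hKLdef]
      linarith
    · intro x _
      apply Continuous.continuousOn
      apply continuous_pi
      intro i
      simp only [hGdef, hFdef]
      exact ((continuous_const.sub ((continuous_const.add (hA_cont i)).mul
        continuous_const)).add continuous_const).add
        (continuous_const.mul (continuous_const.add (hA_cont i)))
    · intro t _ x _
      exact (hGbound t x).trans (Real.le_coe_toNNReal CB)
    · have hmax : max (τ - 0) (0 - 0) = τ := by
        rw [sub_zero, sub_zero]; exact max_eq_left hτ.le
      simp only [Real.coe_toNNReal _ hCB0, Real.coe_toNNReal _ (mul_nonneg hCB0 hτ.le),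
        NNReal.coe_zero]
      rw [hmax, sub_zero]
  obtain ⟨p, hp0, hpderiv⟩ := hpl.exists_eq_forall_mem_Icc_hasDerivWithinAt₀
  replace hp0 : p 0 = x₀ := hp0
  have hcomp : ∀ i, ∀ t ∈ Set.Icc (0:ℝ) τ,
      HasDerivWithinAt (fun s => p s i) (G t (p t) i) (Set.Icc 0 τ) t :=
    fun i t ht => hasDerivWithinAt_pi.1 (hpderiv t ht) i
  -- invariance of the cube
  have hupper : ∀ i, ∀ t ∈ Set.Icc (0:ℝ) τ, p t i ≤ 1 := by
    intro i
    apply NonObsAux.barrier_le (hcomp i)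
    · rw [hp0]; simp only [hx₀def]; linarith
    · intro t ht h1
      have hci : NonObsAux.clampU (p t i) = 1 := NonObsAux.clamp_eq_one h1
      have hsum_le : (∑ j, Γ i j * NonObsAux.clampU (p t j)) ≤ 0 := by
        have he : (∑ j, Γ i j * NonObsAux.clampU (p t j)) = ∑ j, Γ i j * (NonObsAux.clampU (p t j) - 1) := by
          simp [mul_sub, Finset.sum_sub_distrib, hΓ_row i]
        rw [he]
        apply Finset.sum_nonpos
        intro j _
        rcases eq_or_ne j i with rfl | hne
        · rw [hci]; simp
        · have hg : 0 ≤ Γ i j := hΓ_off i j (Ne.symm hne)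
          have hc1 : NonObsAux.clampU (p t j) - 1 ≤ 0 := by linarith [NonObsAux.clamp_le_one (p t j)]
          nlinarith
      simp only [hGdef, hFdef]
      rw [hci]
      nlinarith [mul_nonneg hsig0 (add_nonneg (hmu i) (hA_nonneg i t))]
  have hlower : ∀ i, ∀ t ∈ Set.Icc (0:ℝ) τ, 0 ≤ p t i := by
    intro i t ht
    have hb : ∀ s ∈ Set.Icc (0:ℝ) τ, -(p s i) ≤ 0 := by
      apply NonObsAux.barrier_le (f := fun s => -(p s i)) (f' := fun s => -(G s (p s) i))
        (fun s hs => ((hcomp i) s hs).neg)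
      · rw [hp0]; simp only [hx₀def]; linarith
      · intro s hs h0
        have hci : NonObsAux.clampU (p s i) = 0 := NonObsAux.clamp_eq_zero (by linarith)
        have hsum_ge : 0 ≤ ∑ j, Γ i j * NonObsAux.clampU (p s j) := by
          apply Finset.sum_nonneg
          intro j _
          rcases eq_or_ne j i with rfl | hne
          · rw [hci]; simp
          · exact mul_nonneg (hΓ_off i j (Ne.symm hne)) (NonObsAux.clamp_nonneg _)
        simp only [hGdef, hFdef]
        rw [hci]
        nlinarith [mul_nonneg (by linarith : (0:ℝ) ≤ 1 - sig)
          (add_nonneg (hmu i) (hA_nonneg i s))]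
    linarith [hb t ht]
  have hcube : ∀ t ∈ Set.Icc (0:ℝ) τ, ∀ i, p t i ∈ Set.Icc (0:ℝ) 1 :=
    fun t ht i => ⟨hlower i t ht, hupper i t ht⟩
  -- on the cube, G agrees with F
  have hGF : ∀ t ∈ Set.Icc (0:ℝ) τ, G t (p t) = F t (p t) := by
    intro t ht
    have he : (fun j => NonObsAux.clampU (p t j)) = p t := funext fun j =>
      NonObsAux.clamp_eq_self (hcube t ht j)
    simp only [hGdef]
    rw [he]
  have hAr : ∀ t ∈ Set.Icc (0:ℝ) τ, ∀ i, A i t = ∑ j, W i j * r t j := by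
    intro t ht i
    simp only [hAdef, hπeq t ht]
  -- p is a solution
  have hsol : IsNonObsSolution τ lam mu W Γ sig rho r p := by
    constructor
    · rw [hp0]
    · intro i t ht
      have h := hasDerivWithinAt_pi.1 (hpderiv t ht) i
      rw [hGF t ht] at h
      have he : F t (p t) i = lam i * p t i ^ 2
          - (lam i + mu i + ∑ j, W i j * r t j) * p t i + (∑ j, Γ i j * p t j)
          + (1 - sig) * (mu i + ∑ j, W i j * r t j) := by
        simp only [hFdef, hAr t ht i]
      rw [he] at h
      exact h
  refine ⟨p, ⟨hsol, hcube⟩, ?_⟩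
  -- uniqueness
  intro q hq t ht
  have hqc : ContinuousOn q (Set.Icc 0 τ) := by
    apply continuousOn_pi.2
    intro i
    exact fun s hs => (hq.2 i s hs).continuousWithinAt
  have hpc : ContinuousOn p (Set.Icc 0 τ) :=
    fun s hs => (hpderiv s hs).continuousWithinAt
  obtain ⟨Mq0, hMq0⟩ := isCompact_Icc.exists_bound_of_continuousOn hqc
  set M := max Mq0 1 with hMdef
  have hM1 : (1:ℝ) ≤ M := le_max_right _ _
  have hqball : ∀ s ∈ Set.Icc (0:ℝ) τ, q s ∈ Metric.closedBall (0 : Fin d → ℝ) M := by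
    intro s hs
    rw [Metric.mem_closedBall, dist_zero_right]
    exact le_trans (hMq0 s hs) (le_max_left _ _)
  have hpball : ∀ s ∈ Set.Icc (0:ℝ) τ, p s ∈ Metric.closedBall (0 : Fin d → ℝ) M := by
    intro s hs
    rw [Metric.mem_closedBall, dist_zero_right]
    apply (pi_norm_le_iff_of_nonneg (by linarith)).2
    intro i
    rw [Real.norm_eq_abs, abs_le]
    have h1 := hcube s hs i
    exact ⟨by linarith [h1.1], by linarith [h1.2]⟩
  set KM := (∑ i, ((2 * M + 1) * lam i + mu i + MA + SΓ i)) + 1 with hKMdef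
  have hKMterm : ∀ i, 0 ≤ (2 * M + 1) * lam i + mu i + MA + SΓ i := fun i => by
    have := hlam i; have := hmu i; have := hSΓ0 i
    nlinarith
  have hKM0 : 0 ≤ KM := by
    have := Finset.sum_nonneg (s := Finset.univ) fun i _ => hKMterm i
    simp only [hKMdef]; linarith
  have hFlip : ∀ s : ℝ,
      LipschitzOnWith KM.toNNReal (F s) (Metric.closedBall (0 : Fin d → ℝ) M) := by
    intro s
    apply LipschitzOnWith.of_dist_le_mul
    intro x hx y hy
    rw [Real.coe_toNNReal _ hKM0, dist_pi_le_iff (mul_nonneg hKM0 dist_nonneg)]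
    intro i
    rw [Real.dist_eq]
    have hxb : ∀ j, |x j| ≤ M := by
      intro j
      rw [Metric.mem_closedBall, dist_zero_right] at hx
      calc |x j| = ‖x j‖ := (Real.norm_eq_abs _).symm
        _ ≤ ‖x‖ := norm_le_pi_norm x j
        _ ≤ M := hx
    have hyb : ∀ j, |y j| ≤ M := by
      intro j
      rw [Metric.mem_closedBall, dist_zero_right] at hy
      calc |y j| = ‖y j‖ := (Real.norm_eq_abs _).symm
        _ ≤ ‖y‖ := norm_le_pi_norm y j
        _ ≤ M := hy
    have hxy : ∀ j, |x j - y j| ≤ dist x y := fun j => by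
      rw [← Real.dist_eq]; exact dist_le_pi_dist x y j
    have hsum : |(∑ j, Γ i j * x j) - ∑ j, Γ i j * y j| ≤ SΓ i * dist x y :=
      NonObsAux.sum_diff_bound _ _ _ _ hxy
    have hkey := NonObsAux.coord_lip (M := M) (hlam i)
      (by have := hA_nonneg i s; have := hlam i; have := hmu i; linarith :
        (0:ℝ) ≤ lam i + mu i + A i s)
      dist_nonneg (hxb i) (hyb i) (hxy i) hsum (T := (1 - sig) * (mu i + A i s))
    simp only [hFdef]
    refine le_trans hkey ?_
    apply mul_le_mul_of_nonneg_right _ dist_nonneg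
    have hsingle : (2 * M + 1) * lam i + mu i + MA + SΓ i
        ≤ ∑ k, ((2 * M + 1) * lam k + mu k + MA + SΓ k) :=
      Finset.single_le_sum (f := fun k => (2 * M + 1) * lam k + mu k + MA + SΓ k)
        (fun k _ => hKMterm k) (Finset.mem_univ i)
    have h1 := hA_le i s
    have h2 := hlam i
    simp only [hKMdef]
    linarith
  have hq' : ∀ s ∈ Set.Ico (0:ℝ) τ, HasDerivWithinAt q (F s (q s)) (Set.Ici s) s := by
    intro s hs
    have hsI : s ∈ Set.Icc (0:ℝ) τ := ⟨hs.1, hs.2.le⟩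
    have h1 : HasDerivWithinAt q (F s (q s)) (Set.Icc 0 τ) s := by
      apply hasDerivWithinAt_pi.2
      intro i
      have he : F s (q s) i = lam i * q s i ^ 2
          - (lam i + mu i + ∑ j, W i j * r s j) * q s i + (∑ j, Γ i j * q s j)
          + (1 - sig) * (mu i + ∑ j, W i j * r s j) := by
        simp only [hFdef, hAr s hsI i]
      rw [he]
      exact hq.2 i s hsI
    exact h1.mono_of_mem_nhdsWithin (Icc_mem_nhdsGE_of_mem hs)
  have hp' : ∀ s ∈ Set.Ico (0:ℝ) τ, HasDerivWithinAt p (F s (p s)) (Set.Ici s) s := by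
    intro s hs
    have hsI : s ∈ Set.Icc (0:ℝ) τ := ⟨hs.1, hs.2.le⟩
    have h1 := hpderiv s hsI
    rw [hGF s hsI] at h1
    exact h1.mono_of_mem_nhdsWithin (Icc_mem_nhdsGE_of_mem hs)
  have huniq := ODE_solution_unique_of_mem_Icc_right (fun s _ => hFlip s) hqc hq'
    (fun s hs => hqball s ⟨hs.1, hs.2.le⟩) hpc hp'
    (fun s hs => hpball s ⟨hs.1, hs.2.le⟩) (by rw [hq.1, hp0])
  exact huniq ht
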